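/- Let τ : U ⊕ K → U ⊕ L be an isometry between finite-dimensional complex inner product spaces, with block decomposition τ = [[A, B], [C, D]] where A : U → U, B : K → U (i.e. block column spaces U, K and block row spaces U, L). Then the operator D + C ∘ (I - A)⁺ ∘ B : K → L is an isometry, where (·)⁺ denotes the Moore-Penrose pseudoinverse. -/

import Mathlib

open Matrix

/-- The Moore-Penrose pseudoinverse conditions. -/
def IsMP {m n : Type*} [Fintype m] [Fintype n]
    (M : Matrix m n ℂ) (P : Matrix n m ℂ) : Prop :=
  M * P * M = M ∧ P * M * P = P ∧ (M * P).IsHermitian ∧ (P * M).IsHermitian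

open ComplexOrder in
/-- If `XᴴX + YᴴY = 0` then `X = 0`. -/
lemma aux_zero {m n p : Type*} [Fintype m] [Fintype n] [Fintype p]
    (X : Matrix m n ℂ) (Y : Matrix p n ℂ) (h : Xᴴ * X + Yᴴ * Y = 0) : X = 0 := by
  have hz : (fromRows X Y)ᴴ * fromRows X Y = 0 := by
    rw [conjTranspose_fromRows_eq_fromCols_conjTranspose, fromCols_mul_fromRows, h]
  have h0 := conjTranspose_mul_self_eq_zero.mp hz
  have h1 := congrArg toRows₁ h0
  rw [toRows₁_fromRows] at h1
  exact h1

/-- If τ = [[A,B],[C,D]] : U ⊕ K → U ⊕ L is an isometry, then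
D + C ∘ (I - A)⁺ ∘ B is an isometry K → L. -/
theorem stmt0 {u k l : ℕ}
    (A : Matrix (Fin u) (Fin u) ℂ) (B : Matrix (Fin u) (Fin k) ℂ)
    (C : Matrix (Fin l) (Fin u) ℂ) (D : Matrix (Fin l) (Fin k) ℂ)
    (hiso : (fromBlocks A B C D)ᴴ * fromBlocks A B C D = 1)
    (P : Matrix (Fin u) (Fin u) ℂ) (hP : IsMP (1 - A) P) :
    (D + C * P * B)ᴴ * (D + C * P * B) = 1 := by
  obtain ⟨hP1, hP2, hP3, hP4⟩ := hP
  -- extract the block relations of the isometry condition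
  rw [fromBlocks_conjTranspose, fromBlocks_multiply, ← fromBlocks_one] at hiso
  have h11 : Aᴴ * A + Cᴴ * C = 1 := by
    have := congrArg toBlocks₁₁ hiso; simpa only [toBlocks_fromBlocks₁₁] using this
  have h12 : Aᴴ * B + Cᴴ * D = 0 := by
    have := congrArg toBlocks₁₂ hiso; simpa only [toBlocks_fromBlocks₁₂] using this
  have h21 : Bᴴ * A + Dᴴ * C = 0 := by
    have := congrArg toBlocks₂₁ hiso; simpa only [toBlocks_fromBlocks₂₁] using this
  have h22 : Bᴴ * B + Dᴴ * D = 1 := by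
    have := congrArg toBlocks₂₂ hiso; simpa only [toBlocks_fromBlocks₂₂] using this
  have hCC : Cᴴ * C = 1 - Aᴴ * A := eq_sub_of_add_eq' h11
  -- N := (1-A) * P, the projection onto the range of (1 - A)
  obtain ⟨N, hN⟩ : ∃ N', N' = (1 - A) * P := ⟨_, rfl⟩
  have hNh : Nᴴ = N := by rw [hN]; exact hP3
  have hNM : N * (1 - A) = 1 - A := by rw [hN]; exact hP1
  have hMN : (1 - A)ᴴ * N = (1 - A)ᴴ := by
    have h := congrArg conjTranspose hNM
    rw [conjTranspose_mul, hNh] at h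
    exact h
  -- R := 1 - N, the complementary projection
  obtain ⟨R, hR⟩ : ∃ R', R' = 1 - N := ⟨_, rfl⟩
  have hRh : Rᴴ = R := by rw [hR, conjTranspose_sub, conjTranspose_one, hNh]
  have hRM : R * (1 - A) = 0 := by
    rw [hR, Matrix.sub_mul, Matrix.one_mul, hNM, sub_self]
  have hMR : (1 - A)ᴴ * R = 0 := by
    rw [hR, Matrix.mul_sub, Matrix.mul_one, hMN, sub_self]
  -- the key positivity argument
  have e : (1 - A)ᴴ * (1 - A) + Cᴴ * C = (1 - A) + (1 - A)ᴴ := by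
    rw [hCC, conjTranspose_sub, conjTranspose_one]
    noncomm_ring
  have hkey : ((1 - A) * R)ᴴ * ((1 - A) * R) + (C * R)ᴴ * (C * R) = 0 := by
    rw [conjTranspose_mul, conjTranspose_mul, hRh]
    calc R * (1 - A)ᴴ * ((1 - A) * R) + R * Cᴴ * (C * R)
        = R * (((1 - A)ᴴ * (1 - A) + Cᴴ * C) * R) := by
          simp only [Matrix.add_mul, Matrix.mul_add, Matrix.mul_assoc]
      _ = R * (((1 - A) + (1 - A)ᴴ) * R) := by rw [e]
      _ = R * ((1 - A) * R) + R * ((1 - A)ᴴ * R) := by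
          simp only [Matrix.add_mul, Matrix.mul_add, Matrix.mul_assoc]
      _ = 0 := by
          rw [hMR, Matrix.mul_zero, add_zero, ← Matrix.mul_assoc, hRM,
            Matrix.zero_mul]
  have hMR0 : (1 - A) * R = 0 := aux_zero _ _ hkey
  have hCR0 : C * R = 0 := aux_zero _ _ (by rw [add_comm] at hkey; exact hkey)
  have hAR : A * R = R := by
    rw [Matrix.sub_mul, Matrix.one_mul, sub_eq_zero] at hMR0
    exact hMR0.symm
  have hBR : Bᴴ * R = 0 := by
    have h := congrArg (fun X => X * R) h21
    simp only [Matrix.add_mul, Matrix.zero_mul, Matrix.mul_assoc, hAR, hCR0,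
      Matrix.mul_zero, add_zero] at h
    exact h
  have hBN : Bᴴ * N = Bᴴ := by
    rw [hR, Matrix.mul_sub, Matrix.mul_one, sub_eq_zero] at hBR
    exact hBR.symm
  have hNB : N * B = B := by
    have h := congrArg conjTranspose hBN
    rw [conjTranspose_mul, conjTranspose_conjTranspose, hNh] at h
    exact h
  -- convenient forms
  have hAP : A * P = P - N := by
    rw [hN, Matrix.sub_mul, Matrix.one_mul, sub_sub_cancel]
  have hPA : Pᴴ * Aᴴ = Pᴴ - N := by
    have h := congrArg conjTranspose hAP
    rw [conjTranspose_mul, conjTranspose_sub, hNh] at h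
    exact h
  have fAPB : A * (P * B) = P * B - B := by
    rw [← Matrix.mul_assoc, hAP, Matrix.sub_mul, hNB]
  have fPAB : Pᴴ * (Aᴴ * B) = Pᴴ * B - B := by
    rw [← Matrix.mul_assoc, hPA, Matrix.sub_mul, hNB]
  have fBNPB : Bᴴ * (N * (P * B)) = Bᴴ * (P * B) := by
    rw [← Matrix.mul_assoc, hBN]
  have hDC : Dᴴ * C = -(Bᴴ * A) := eq_neg_of_add_eq_zero_right h21
  have hCD : Cᴴ * D = -(Aᴴ * B) := eq_neg_of_add_eq_zero_right h12
  -- the four pieces of the final expansion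
  have E1 : Dᴴ * D = 1 - Bᴴ * B := eq_sub_of_add_eq' h22
  have E2 : Dᴴ * (C * (P * B)) = Bᴴ * B - Bᴴ * (P * B) := by
    rw [← Matrix.mul_assoc, hDC, Matrix.neg_mul, Matrix.mul_assoc, fAPB,
      Matrix.mul_sub, neg_sub]
  have E3 : Bᴴ * (Pᴴ * (Cᴴ * D)) = Bᴴ * B - Bᴴ * (Pᴴ * B) := by
    rw [hCD, Matrix.mul_neg, Matrix.mul_neg, fPAB, Matrix.mul_sub, neg_sub]
  have t1 : Bᴴ * (Pᴴ * (Aᴴ * (P * B))) = Bᴴ * (Pᴴ * (P * B)) - Bᴴ * (P * B) := by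
    rw [← Matrix.mul_assoc Pᴴ Aᴴ, hPA, Matrix.sub_mul, Matrix.mul_sub, fBNPB]
  have t2 : Bᴴ * (Pᴴ * (Aᴴ * B)) = Bᴴ * (Pᴴ * B) - Bᴴ * B := by
    rw [fPAB, Matrix.mul_sub]
  have hCCPB : Cᴴ * (C * (P * B)) = P * B - Aᴴ * (A * (P * B)) := by
    rw [← Matrix.mul_assoc, hCC, Matrix.sub_mul, Matrix.one_mul, Matrix.mul_assoc]
  have E4 : Bᴴ * (Pᴴ * (Cᴴ * (C * (P * B)))) =
      Bᴴ * (P * B) + Bᴴ * (Pᴴ * B) - Bᴴ * B := by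
    calc Bᴴ * (Pᴴ * (Cᴴ * (C * (P * B))))
        = Bᴴ * (Pᴴ * (P * B)) - (Bᴴ * (Pᴴ * (Aᴴ * (P * B))) - Bᴴ * (Pᴴ * (Aᴴ * B))) := by
          rw [hCCPB, fAPB]
          simp only [Matrix.mul_sub]
      _ = Bᴴ * (Pᴴ * (P * B)) -
            ((Bᴴ * (Pᴴ * (P * B)) - Bᴴ * (P * B)) - (Bᴴ * (Pᴴ * B) - Bᴴ * B)) := by
          rw [t1, t2]
      _ = Bᴴ * (P * B) + Bᴴ * (Pᴴ * B) - Bᴴ * B := by abel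
  -- final computation
  calc (D + C * P * B)ᴴ * (D + C * P * B)
      = Dᴴ * D + Dᴴ * (C * (P * B)) +
          (Bᴴ * (Pᴴ * (Cᴴ * D)) + Bᴴ * (Pᴴ * (Cᴴ * (C * (P * B))))) := by
        simp only [conjTranspose_add, conjTranspose_mul, Matrix.add_mul,
          Matrix.mul_add, Matrix.mul_assoc]
        abel
    _ = (1 - Bᴴ * B) + (Bᴴ * B - Bᴴ * (P * B)) +
          ((Bᴴ * B - Bᴴ * (Pᴴ * B)) + (Bᴴ * (P * B) + Bᴴ * (Pᴴ * B) - Bᴴ * B)) := by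
        rw [E1, E2, E3, E4]
    _ = 1 := by abel
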